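/- Let s_n be the number of words of length n over {A,B,C,D} starting with A, with no other A, and with no CB-factor. Then the generating function S(x) = Σ_{n≥1} s_n x^n satisfies S(x) = x/(1 - 3x + x²) as formal power series. -/

import Mathlib

def IsSegment (w : List (Fin 4)) : Prop :=
  ∃ t : List (Fin 4), w = (0 : Fin 4) :: t ∧ (0 : Fin 4) ∉ t

def NoCB (w : List (Fin 4)) : Prop :=
  ∀ i : ℕ, ¬ (w[i]? = some (2 : Fin 4) ∧ w[i + 1]? = some (1 : Fin 4))

noncomputable def segCount (n : ℕ) : ℕ :=
  Nat.card {w : List (Fin 4) // w.length = n ∧ IsSegment w ∧ NoCB w}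

lemma noCB_nil : NoCB ([] : List (Fin 4)) := by
  intro i h
  simp at h

lemma noCB_cons (a : Fin 4) (t : List (Fin 4)) :
    NoCB (a :: t) ↔ ¬(a = 2 ∧ t.head? = some 1) ∧ NoCB t := by
  constructor
  · intro h
    constructor
    · rintro ⟨ha, ht⟩
      exact h 0 ⟨by simp [ha], by cases t <;> simp_all⟩
    · intro i hi
      exact h (i + 1) (by simpa using hi)
  · rintro ⟨h0, h⟩ i hi
    cases i with
    | zero =>
      apply h0
      refine ⟨by simpa using hi.1, ?_⟩
      have := hi.2
      cases t <;> simp_all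
    | succ i => exact h i (by simpa using hi)

def Good (n : ℕ) : Type := {t : List (Fin 4) // t.length = n ∧ (0 : Fin 4) ∉ t ∧ NoCB t}

instance goodFinite (n : ℕ) : Finite (Good n) := by
  have h : Finite {l : List (Fin 4) // l.length = n} :=
    (List.finite_length_eq (Fin 4) n).to_subtype
  exact Finite.of_injective
    (fun t : Good n => (⟨t.1, t.2.1⟩ : {l : List (Fin 4) // l.length = n}))
    (by rintro ⟨a, _⟩ ⟨b, _⟩ h; exact Subtype.ext (by simpa using h))

lemma good_tail {n : ℕ} {a : Fin 4} (t : Good (n + 1)) (ht : t.1.head? = some a) :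
    t.1.tail.length = n ∧ (0 : Fin 4) ∉ t.1.tail ∧ NoCB t.1.tail ∧
      ¬(a = 2 ∧ t.1.tail.head? = some 1) ∧ a :: t.1.tail = t.1 := by
  have hc : a :: t.1.tail = t.1 := List.cons_head?_tail (by rw [ht]; rfl)
  have hcb := t.2.2.2
  rw [← hc] at hcb
  have h2 := (noCB_cons a _).1 hcb
  refine ⟨?_, fun hx => t.2.2.1 (List.mem_of_mem_tail hx), h2.2, h2.1, hc⟩
  have := t.2.1
  rw [← hc] at this
  simpa using this

/-- prepend a nonzero letter -/
def eCons (a : Fin 4) (ha : a ≠ 0) (n : ℕ) :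
    {s : Good n // ¬(a = 2 ∧ s.1.head? = some 1)} ≃
      {t : Good (n + 1) // t.1.head? = some a} where
  toFun s := ⟨⟨a :: s.1.1,
      by simp [s.1.2.1],
      by simp only [List.mem_cons, not_or]; exact ⟨fun h => ha h.symm, s.1.2.2.1⟩,
      (noCB_cons a s.1.1).2 ⟨s.2, s.1.2.2.2⟩⟩, rfl⟩
  invFun t := ⟨⟨t.1.1.tail, (good_tail t.1 t.2).1, (good_tail t.1 t.2).2.1,
      (good_tail t.1 t.2).2.2.1⟩, (good_tail t.1 t.2).2.2.2.1⟩
  left_inv s := rfl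
  right_inv t := Subtype.ext (Subtype.ext (good_tail t.1 t.2).2.2.2.2)

noncomputable def u (n : ℕ) : ℕ := Nat.card (Good n)
noncomputable def c (n : ℕ) : ℕ := Nat.card {s : Good n // s.1.head? ≠ some 1}

lemma u_zero : u 0 = 1 := by
  have : Unique (Good 0) :=
    { default := ⟨[], rfl, by simp, noCB_nil⟩
      uniq := fun t => Subtype.ext (List.eq_nil_of_length_eq_zero t.2.1) }
  exact Nat.card_unique

lemma c_zero : c 0 = 1 := by
  have e : {s : Good 0 // s.1.head? ≠ some 1} ≃ Good 0 :=
    Equiv.subtypeUnivEquiv (fun s => by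
      have h : s.1 = [] := List.eq_nil_of_length_eq_zero s.2.1
      simp [h])
  rw [c, Nat.card_congr e]
  exact u_zero

lemma good_head? {n : ℕ} (t : Good (n + 1)) : t.1.head? = some t.1.headI := by
  cases h : t.1 with
  | nil => have := t.2.1; rw [h] at this; simp at this
  | cons b r => simp [h]

lemma card_fiber_head (n : ℕ) (a : Fin 4) (ha : a ≠ 0) :
    Nat.card {t : Good (n + 1) // t.1.head? = some a} =
      Nat.card {s : Good n // ¬(a = 2 ∧ s.1.head? = some 1)} :=
  (Nat.card_congr (eCons a ha n)).symm

lemma u_succ (n : ℕ) : u (n + 1) = 2 * u n + c n := by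
  classical
  have e := Equiv.sigmaFiberEquiv (fun t : Good (n + 1) => t.1.headI)
  have hu : u (n + 1) = ∑ a : Fin 4, Nat.card {t : Good (n + 1) // t.1.headI = a} := by
    rw [u, ← Nat.card_congr e]
    have : ∀ a : Fin 4, Fintype {t : Good (n + 1) // t.1.headI = a} :=
      fun a => Fintype.ofFinite _
    simp [Nat.card_eq_fintype_card]
  have hfib : ∀ a : Fin 4, Nat.card {t : Good (n + 1) // t.1.headI = a} =
      Nat.card {t : Good (n + 1) // t.1.head? = some a} := fun a =>
    Nat.card_congr (Equiv.subtypeEquivRight (fun t => by rw [good_head? t]; simp))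
  have hz : Nat.card {t : Good (n + 1) // t.1.headI = 0} = 0 := by
    have : IsEmpty {t : Good (n + 1) // t.1.headI = 0} := by
      constructor
      rintro ⟨t, ht⟩
      have hm : t.1.headI ∈ t.1 := by
        cases h : t.1 with
        | nil => have := t.2.1; rw [h] at this; simp at this
        | cons b r => simp [h]
      rw [ht] at hm
      exact t.2.2.1 hm
    exact Nat.card_of_isEmpty
  have h1 : Nat.card {t : Good (n + 1) // t.1.headI = 1} = u n := by
    rw [hfib, card_fiber_head n 1 (by decide)]
    exact Nat.card_congr (Equiv.subtypeUnivEquiv (fun s => by simp))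
  have h3 : Nat.card {t : Good (n + 1) // t.1.headI = 3} = u n := by
    rw [hfib, card_fiber_head n 3 (by decide)]
    exact Nat.card_congr (Equiv.subtypeUnivEquiv (fun s => by simp))
  have h2 : Nat.card {t : Good (n + 1) // t.1.headI = 2} = c n := by
    rw [hfib, card_fiber_head n 2 (by decide)]
    exact Nat.card_congr (Equiv.subtypeEquivRight (fun s => by simp))
  rw [hu, Fin.sum_univ_four, hz, h1, h2, h3]
  ring

lemma u_split (n : ℕ) : u (n + 1) = u n + c (n + 1) := by
  classical
  have e := (Equiv.sumCompl (fun t : Good (n + 1) => t.1.head? = some 1)).symm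
  have h1 : Nat.card {t : Good (n + 1) // t.1.head? = some 1} = u n := by
    rw [card_fiber_head n 1 (by decide)]
    exact Nat.card_congr (Equiv.subtypeUnivEquiv (fun s => by simp))
  rw [u, Nat.card_congr e, Nat.card_sum, h1]
  rfl

lemma u_rec (n : ℕ) : u (n + 2) + u n = 3 * u (n + 1) := by
  have h1 : u (n + 2) = 2 * u (n + 1) + c (n + 1) := u_succ (n + 1)
  have h2 : u (n + 1) = u n + c (n + 1) := u_split n
  omega

lemma u_one : u 1 = 3 := by
  have h : u 1 = 2 * u 0 + c 0 := u_succ 0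
  rw [u_zero, c_zero] at h
  omega

lemma seg_tail {n : ℕ} (w : List (Fin 4))
    (h : w.length = n + 1 ∧ IsSegment w ∧ NoCB w) :
    w.tail.length = n ∧ (0 : Fin 4) ∉ w.tail ∧ NoCB w.tail ∧
      (0 : Fin 4) :: w.tail = w := by
  obtain ⟨t, rfl, hmem⟩ := h.2.1
  have hcb := ((noCB_cons 0 t).1 h.2.2).2
  have hlen : t.length = n := by simpa using h.1
  exact ⟨hlen, hmem, hcb, rfl⟩

def segEquiv (n : ℕ) :
    {w : List (Fin 4) // w.length = n + 1 ∧ IsSegment w ∧ NoCB w} ≃ Good n where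
  toFun w := ⟨w.1.tail, (seg_tail w.1 w.2).1, (seg_tail w.1 w.2).2.1,
    (seg_tail w.1 w.2).2.2.1⟩
  invFun t := ⟨(0 : Fin 4) :: t.1, by simp [t.2.1], ⟨t.1, rfl, t.2.2.1⟩,
    (noCB_cons 0 t.1).2 ⟨by simp, t.2.2.2⟩⟩
  left_inv w := Subtype.ext (seg_tail w.1 w.2).2.2.2
  right_inv t := rfl

lemma segCount_zero : segCount 0 = 0 := by
  have : IsEmpty {w : List (Fin 4) // w.length = 0 ∧ IsSegment w ∧ NoCB w} := by
    constructor
    rintro ⟨w, hlen, ⟨t, rfl, -⟩, -⟩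
    simp at hlen
  exact Nat.card_of_isEmpty

lemma segCount_succ (n : ℕ) : segCount (n + 1) = u n :=
  Nat.card_congr (segEquiv n)

lemma segCount_one : segCount 1 = 1 := by rw [segCount_succ, u_zero]

lemma segCount_two : segCount 2 = 3 := by
  have : segCount 2 = u 1 := segCount_succ 1
  rw [this, u_one]

lemma segCount_rec (n : ℕ) :
    segCount (n + 3) + segCount (n + 1) = 3 * segCount (n + 2) := by
  have h1 : segCount (n + 3) = u (n + 2) := segCount_succ (n + 2)
  have h2 : segCount (n + 2) = u (n + 1) := segCount_succ (n + 1)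
  have h3 : segCount (n + 1) = u n := segCount_succ n
  rw [h1, h2, h3]
  exact u_rec n

open PowerSeries in
/-- `S(x) = Σ_{n ≥ 1} s_n x^n` satisfies `S(x) = x / (1 - 3x + x²)`, stated in the
equivalent multiplied-through form `(1 - 3x + x²) · S(x) = x`. -/
theorem segCount_generating_function :
    (1 - 3 * (X : PowerSeries ℚ) + X ^ 2) *
      PowerSeries.mk (fun n => if n = 0 then 0 else (segCount n : ℚ)) = X := by
  set S : PowerSeries ℚ :=
    PowerSeries.mk (fun n => if n = 0 then 0 else (segCount n : ℚ)) with hS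
  have expand : (1 - 3 * (X : PowerSeries ℚ) + X ^ 2) * S
      = S - C 3 * (X * S) + X * (X * S) := by
    have h3 : (3 : PowerSeries ℚ) = C 3 := (map_ofNat _ 3).symm
    rw [← h3]; ring
  rw [expand]
  ext n
  match n with
  | 0 =>
    simp [hS, coeff_zero_eq_constantCoeff, map_mul, constantCoeff_X]
  | 1 =>
    simp [hS, coeff_succ_X_mul, coeff_zero_eq_constantCoeff, map_mul,
      constantCoeff_X, segCount_one]
  | 2 =>
    simp [hS, coeff_succ_X_mul, coeff_X, segCount_two, segCount_one]
  | (m + 3) =>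
    have hrec := segCount_rec m
    simp [hS, coeff_succ_X_mul, coeff_X]
    have : (segCount (m + 3) : ℚ) + segCount (m + 1) = 3 * segCount (m + 2) := by
      exact_mod_cast congrArg (Nat.cast : ℕ → ℚ) hrec
    linarith
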